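/- Let Y_1,…,Y_n be i.i.d. random variables in [0,1] with mean μ, and let μ̂ = (1/n)∑ Y_i. If the empirical Bernstein inequality μ̂ − μ ≤ 7ln(2/δ)/(3(n−1)) + sqrt(2σ̂² ln(2/δ)/n) holds (where σ̂² is the sample variance) with probability at least 1−δ, then with probability at least 1−δ, μ̂ ≤ max(16 ln(2/δ)/(n−1), 2μ). -/

import Mathlib

open MeasureTheory ProbabilityTheory

lemma stmt3_aux {m t μ : ℝ} (htpos : 0 < t) (hgt : 16*t < m)
    (hω' : m - μ ≤ 7*t/3 + Real.sqrt (2*m*t)) : m ≤ 2*μ := by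
  have h1 : 0 ≤ m/2 - 7*t/3 := by nlinarith
  have hkey : Real.sqrt (2*m*t) ≤ m/2 - 7*t/3 := by
    rw [show m/2 - 7*t/3 = Real.sqrt ((m/2 - 7*t/3)^2) from (Real.sqrt_sq h1).symm]
    apply Real.sqrt_le_sqrt
    nlinarith [sq_nonneg t, mul_nonneg (by linarith : (0:ℝ) ≤ m - 16*t) htpos.le,
      sq_nonneg (m - 16*t)]
  linarith

theorem stmt3 {Ω : Type*} [MeasurableSpace Ω] (P : Measure Ω) [IsProbabilityMeasure P]
    (n : ℕ) (hn : 2 ≤ n) (δ : ℝ) (hδ : δ ∈ Set.Ioo (0:ℝ) 1)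
    (Y : Fin n → Ω → ℝ) (hmeas : ∀ i, Measurable (Y i))
    (hY : ∀ i ω, Y i ω ∈ Set.Icc (0:ℝ) 1)
    (hindep : iIndepFun Y P)
    (hident : ∀ i, IdentDistrib (Y i) (Y ⟨0, by omega⟩) P P)
    (μ : ℝ) (hmean : ∀ i, ∫ ω, Y i ω ∂P = μ)
    (hbern : P {ω | (∑ i, Y i ω)/n - μ ≤
        7*Real.log (2/δ)/(3*(n-1)) +
        Real.sqrt (2*((1/(2*n*(n-1))) *
          ∑ i, ∑ j, if i ≠ j then (Y i ω - Y j ω)^2 else 0) * Real.log (2/δ)/n)}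
      ≥ ENNReal.ofReal (1-δ)) :
    P {ω | (∑ i, Y i ω)/n ≤ max (16*Real.log (2/δ)/(n-1)) (2*μ)}
      ≥ ENNReal.ofReal (1-δ) := by
  refine le_trans hbern (measure_mono ?_)
  intro ω hω
  simp only [Set.mem_setOf_eq] at hω ⊢
  have hLpos : 0 < Real.log (2/δ) := Real.log_pos (by
    rw [lt_div_iff₀ hδ.1]; linarith [hδ.2])
  set L := Real.log (2/δ) with hLdef
  have hn2 : (2:ℝ) ≤ (n:ℝ) := by exact_mod_cast hn
  have hn1 : (1:ℝ) ≤ (n:ℝ) - 1 := by linarith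
  have hnpos : (0:ℝ) < (n:ℝ) := by linarith
  have hn1pos : (0:ℝ) < (n:ℝ) - 1 := by linarith
  set T := ∑ i, Y i ω with hT
  set m := T / (n:ℝ) with hm
  have hT0 : 0 ≤ T := Finset.sum_nonneg fun i _ => (hY i ω).1
  have hm0 : 0 ≤ m := div_nonneg hT0 hnpos.le
  set S := (1/(2*(n:ℝ)*((n:ℝ)-1))) *
      ∑ i, ∑ j, if i ≠ j then (Y i ω - Y j ω)^2 else 0 with hSdef
  -- sum bound
  have hsum1 : (∑ i, ∑ j, if i ≠ j then (Y i ω - Y j ω)^2 else 0)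
      ≤ ∑ i : Fin n, ∑ j : Fin n, (if i ≠ j then Y i ω + Y j ω else 0) := by
    refine Finset.sum_le_sum fun i _ => Finset.sum_le_sum fun j _ => ?_
    by_cases h : i = j
    · simp [h]
    · simp only [h, ne_eq, not_false_eq_true, if_true]
      have h1 := hY i ω; have h2 := hY j ω
      nlinarith [h1.1, h1.2, h2.1, h2.2]
  have hsum2 : (∑ i : Fin n, ∑ j : Fin n, (if i ≠ j then Y i ω + Y j ω else 0))
      = 2*((n:ℝ)-1)*T := by
    have inner : ∀ i : Fin n, (∑ j : Fin n, (if i ≠ j then Y i ω + Y j ω else 0))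
        = (n:ℝ)*Y i ω + T - 2*Y i ω := by
      intro i
      have e1 : ∀ j : Fin n, (if i ≠ j then Y i ω + Y j ω else 0)
          = (Y i ω + Y j ω) - (if i = j then Y i ω + Y j ω else 0) := by
        intro j; by_cases h : i = j <;> simp [h]
      rw [Finset.sum_congr rfl fun j _ => e1 j, Finset.sum_sub_distrib,
        Finset.sum_ite_eq, Finset.sum_add_distrib]
      simp [Finset.card_univ, ← hT]
      ring
    rw [Finset.sum_congr rfl fun i _ => inner i]
    rw [Finset.sum_sub_distrib, Finset.sum_add_distrib, ← Finset.mul_sum,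
      ← Finset.mul_sum, Finset.sum_const, Finset.card_univ]
    simp [← hT]
    ring
  have hSm : S ≤ m := by
    have hc : (0:ℝ) < 1/(2*(n:ℝ)*((n:ℝ)-1)) := by positivity
    have := mul_le_mul_of_nonneg_left (hsum1.trans_eq hsum2) hc.le
    rw [hSdef, hm]
    calc (1/(2*(n:ℝ)*((n:ℝ)-1))) * ∑ i, ∑ j, (if i ≠ j then (Y i ω - Y j ω)^2 else 0)
        ≤ (1/(2*(n:ℝ)*((n:ℝ)-1))) * (2*((n:ℝ)-1)*T) := this
      _ = T / (n:ℝ) := by field_simp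
  have hS0 : 0 ≤ S := by
    rw [hSdef]
    have : (0:ℝ) ≤ ∑ i, ∑ j, (if i ≠ j then (Y i ω - Y j ω)^2 else 0) := by
      refine Finset.sum_nonneg fun i _ => Finset.sum_nonneg fun j _ => ?_
      positivity
    positivity
  set t := L / ((n:ℝ)-1) with ht
  have htpos : 0 < t := div_pos hLpos hn1pos
  have hsqrt : Real.sqrt (2*S*L/(n:ℝ)) ≤ Real.sqrt (2*m*t) := by
    apply Real.sqrt_le_sqrt
    have h1 : 2*S*L ≤ 2*m*L := by nlinarith
    have h2 : 2*S*L/(n:ℝ) ≤ 2*m*L/((n:ℝ)-1) :=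
      div_le_div₀ (by positivity) h1 hn1pos (by linarith)
    calc 2*S*L/(n:ℝ) ≤ 2*m*L/((n:ℝ)-1) := h2
      _ = 2*m*t := by rw [ht]; ring
  have hω' : m - μ ≤ 7*t/3 + Real.sqrt (2*m*t) := by
    have e : 7*L/(3*((n:ℝ)-1)) = 7*t/3 := by rw [ht]; field_simp
    calc m - μ ≤ 7*L/(3*((n:ℝ)-1)) + Real.sqrt (2*S*L/(n:ℝ)) := hω
      _ ≤ 7*t/3 + Real.sqrt (2*m*t) := by rw [e]; linarith [hsqrt]
  rcases le_or_gt m (16*L/((n:ℝ)-1)) with h | h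
  · exact le_max_of_le_left h
  · have hgt : 16*t < m := by rw [ht]; calc 16*(L/((n:ℝ)-1)) = 16*L/((n:ℝ)-1) := by ring
      _ < m := h
    exact le_max_of_le_right (stmt3_aux htpos hgt hω')
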